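/- arXiv:1910.10290 — 6 statements merged into one kernel-verified Lean document; each statement's English description precedes it below -/
import Mathlib

section
/- For all integers j ≤ k, G(j,k) > 0. -/
/-- Auxiliary recursion: `Gaux s α j n` corresponds to `G(j, j-1+n)`. -/
noncomputable def Gaux (s α : ℤ → ℝ) (j : ℤ) : ℕ → ℝ
  | 0 => 0
  | 1 => 1
  | (n+2) => (2 * s (j + n) + Real.cos (α (j + n)) + Real.cos (α (j + n + 1))) * Gaux s α j (n+1)
      - (Real.cos (α (j + n)))^2 * Gaux s α j n

/-- `G s α j k` is the recursively defined quantity `G(j,k)`, with `G(j,j-1)=0`, `G(j,j)=1`,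
`G(j,k) = (2 s_{k-1} + cos α_{k-1} + cos α_k) G(j,k-1) − cos²(α_{k-1}) G(j,k-2)` for `k ≥ j+1`. -/
noncomputable def G (s α : ℤ → ℝ) (j k : ℤ) : ℝ := Gaux s α j (k - (j-1)).toNat

/-- `Pprod α a b = ∏_{i=a}^{b-1} cos (α i)`. -/
noncomputable def Pprod (α : ℤ → ℝ) (a b : ℤ) : ℝ := ∏ i ∈ Finset.Ico a b, Real.cos (α i)

lemma Gaux_key (s α : ℤ → ℝ) (hs : ∀ i, 0 < s i) (hα : ∀ i, 0 < Real.cos (α i)) (j : ℤ) :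
    ∀ n : ℕ, 0 < Gaux s α j (n+1) ∧
      Real.cos (α (j + n)) * Gaux s α j n < Gaux s α j (n+1) := by
  intro n
  induction n with
  | zero => simp [Gaux]
  | succ n ih =>
    obtain ⟨h1, h2⟩ := ih
    have hc := hα (j + n)
    have hc' := hα (j + n + 1)
    have hsn := hs (j + n)
    have hidx : (j + ((n:ℤ)+1)) = j + n + 1 := by ring
    rw [Nat.cast_add, Nat.cast_one, hidx]
    have key : Real.cos (α (j + n + 1)) * Gaux s α j (n+1) < Gaux s α j (n+2) := by
      show Real.cos (α (j + n + 1)) * Gaux s α j (n+1) <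
        (2 * s (j + n) + Real.cos (α (j + n)) + Real.cos (α (j + n + 1))) * Gaux s α j (n+1)
          - (Real.cos (α (j + n)))^2 * Gaux s α j n
      have h3 : Real.cos (α (j + n)) * (Real.cos (α (j + n)) * Gaux s α j n)
          < Real.cos (α (j + n)) * Gaux s α j (n+1) := by
        exact mul_lt_mul_of_pos_left h2 hc
      have h4 : 0 < 2 * s (j + n) * Gaux s α j (n+1) := by positivity
      nlinarith
    exact ⟨lt_trans (mul_pos hc' h1) key, key⟩

theorem stmt0 (s α : ℤ → ℝ) (hs : ∀ i, 0 < s i) (hα : ∀ i, 0 < Real.cos (α i))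
    (j k : ℤ) (hjk : j ≤ k) : 0 < G s α j k := by
  have h : (k - (j-1)).toNat = (k - j).toNat + 1 := by omega
  unfold G
  rw [h]
  exact (Gaux_key s α hs hα j (k - j).toNat).1
end

section
/- For all integers j ≤ k, G(j,k) > Π(j+1, k+1), where Π(a,b) denotes the product of cos(α_i) for a ≤ i ≤ b−1. -/
lemma prod_Ico_top (f : ℤ → ℝ) (a b : ℤ) (h : a ≤ b) :
    (∏ i ∈ Finset.Ico a (b+1), f i) = (∏ i ∈ Finset.Ico a b, f i) * f b := by
  rw [show Finset.Ico a (b+1) = insert b (Finset.Ico a b) by ext x; simp; omega,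
    Finset.prod_insert (by simp)]
  ring

lemma GauxA (s α : ℤ → ℝ) (hs : ∀ i, 0 < s i) (hα : ∀ i, 0 < Real.cos (α i)) (j : ℤ) :
    ∀ n : ℕ, 0 ≤ Gaux s α j n ∧
      Real.cos (α (j + n)) * Gaux s α j n < Gaux s α j (n+1) ∧
      0 < Gaux s α j (n+1) := by
  intro n
  induction n with
  | zero => simp [Gaux]
  | succ n ih =>
    obtain ⟨h0, h1, h2⟩ := ih
    refine ⟨le_of_lt h2, ?_, ?_⟩
    · show _ < (2 * s (j + n) + Real.cos (α (j + n)) + Real.cos (α (j + n + 1)))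
          * Gaux s α j (n+1) - (Real.cos (α (j + n)))^2 * Gaux s α j n
      have hc := hα (j + n)
      have hc' := hα (j + n + 1)
      have hcast : (j : ℤ) + (n+1 : ℕ) = j + n + 1 := by push_cast; ring
      rw [hcast]
      have key : (Real.cos (α (j + n)))^2 * Gaux s α j n
          < Real.cos (α (j + n)) * Gaux s α j (n+1) := by
        rw [pow_two, mul_assoc]
        exact mul_lt_mul_of_pos_left h1 hc
      nlinarith [hs (j + n), mul_pos (hs (j+n)) h2]
    · show 0 < (2 * s (j + n) + Real.cos (α (j + n)) + Real.cos (α (j + n + 1)))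
          * Gaux s α j (n+1) - (Real.cos (α (j + n)))^2 * Gaux s α j n
      have hc := hα (j + n)
      have key : (Real.cos (α (j + n)))^2 * Gaux s α j n
          < Real.cos (α (j + n)) * Gaux s α j (n+1) := by
        rw [pow_two, mul_assoc]
        exact mul_lt_mul_of_pos_left h1 hc
      nlinarith [hs (j + n), mul_pos (hs (j+n)) h2, hα (j+n+1)]

lemma GauxC (s α : ℤ → ℝ) (hs : ∀ i, 0 < s i) (hα : ∀ i, 0 < Real.cos (α i)) (j : ℤ) :
    ∀ n : ℕ, (∏ i ∈ Finset.Ico (j+1) (j+1+n), Real.cos (α i)) ≤ Gaux s α j (n+1) := by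
  intro n
  induction n with
  | zero => simp [Gaux]
  | succ n ih =>
    obtain ⟨h0, h1, h2⟩ := GauxA s α hs hα j (n+1)
    have hsplit : (∏ i ∈ Finset.Ico (j+1) (j+1+(n+1:ℕ)), Real.cos (α i))
        = (∏ i ∈ Finset.Ico (j+1) (j+1+n), Real.cos (α i)) * Real.cos (α (j+1+n)) := by
      have : (j+1+(n+1:ℕ) : ℤ) = (j+1+n) + 1 := by push_cast; ring
      rw [this, prod_Ico_top _ _ _ (by omega)]
    rw [hsplit]
    have hc := hα (j+1+n)
    have hidx : (j : ℤ) + (n+1 : ℕ) = j+1+n := by push_cast; ring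
    rw [hidx] at h1
    calc (∏ i ∈ Finset.Ico (j+1) (j+1+(n:ℕ)), Real.cos (α i)) * Real.cos (α (j+1+n))
        ≤ Gaux s α j (n+1) * Real.cos (α (j+1+n)) :=
          mul_le_mul_of_nonneg_right ih (le_of_lt hc)
      _ = Real.cos (α (j+1+n)) * Gaux s α j (n+1) := by ring
      _ ≤ Gaux s α j (n+2) := le_of_lt h1

theorem stmt3 (s α : ℤ → ℝ) (hs : ∀ i, 0 < s i)
    (hα : ∀ i, 0 < Real.cos (α i)) (hα' : ∀ i, Real.cos (α i) ≤ 1)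
    (j k : ℤ) (hjk : j < k) :
    G s α j k > Pprod α (j+1) (k+1) := by
  set n : ℕ := (k - j - 1).toNat with hn
  have hn2 : (k - (j-1)).toNat = n + 2 := by omega
  have hncast : (n : ℤ) = k - j - 1 := by omega
  rw [G, hn2, Pprod]
  obtain ⟨h0, h1, h2⟩ := GauxA s α hs hα j (n+1)
  have hC := GauxC s α hs hα j n
  have hidx : (j : ℤ) + (n+1 : ℕ) = j+1+n := by push_cast; ring
  rw [hidx] at h1
  have hc := hα (j+1+n)
  have hsplit : (∏ i ∈ Finset.Ico (j+1) (k+1), Real.cos (α i))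
      = (∏ i ∈ Finset.Ico (j+1) (j+1+n), Real.cos (α i)) * Real.cos (α (j+1+n)) := by
    have : (k+1 : ℤ) = (j+1+n) + 1 := by omega
    rw [this, prod_Ico_top _ _ _ (by omega)]
  rw [hsplit]
  calc (∏ i ∈ Finset.Ico (j+1) (j+1+(n:ℕ)), Real.cos (α i)) * Real.cos (α (j+1+n))
      ≤ Gaux s α j (n+1) * Real.cos (α (j+1+n)) :=
        mul_le_mul_of_nonneg_right hC (le_of_lt hc)
    _ = Real.cos (α (j+1+n)) * Gaux s α j (n+1) := by ring
    _ < Gaux s α j (n+2) := h1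
end

section
/- For all integers i ≤ j ≤ k, G(i,k) = G(i,j)·G(j,k) − cos²(α_j)·G(i,j-1)·G(j+1,k). -/
lemma G_self (s α : ℤ → ℝ) (j : ℤ) : G s α j j = 1 := by
  have h : (j - (j-1)).toNat = 1 := by omega
  simp [G, h, Gaux]

lemma G_pred (s α : ℤ → ℝ) (j k : ℤ) (h : k = j - 1) : G s α j k = 0 := by
  have h' : (k - (j-1)).toNat = 0 := by omega
  simp [G, h', Gaux]

lemma G_rec (s α : ℤ → ℝ) (j k : ℤ) (h : j + 1 ≤ k) :
    G s α j k = (2 * s (k-1) + Real.cos (α (k-1)) + Real.cos (α k)) * G s α j (k-1)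
      - (Real.cos (α (k-1)))^2 * G s α j (k-2) := by
  obtain ⟨n, hn⟩ : ∃ n : ℕ, (k - (j-1)).toNat = n + 2 := ⟨(k - j - 1).toNat, by omega⟩
  have h2 : (k - 1 - (j-1)).toNat = n + 1 := by omega
  have h3 : (k - 2 - (j-1)).toNat = n := by omega
  have hj : j + (n:ℤ) = k - 1 := by omega
  have hj2 : j + (n:ℤ) + 1 = k := by omega
  have e : k - 1 + 1 = k := by ring
  simp only [G, hn, h2, h3, Gaux, hj, hj2, e]

theorem stmt5 (s α : ℤ → ℝ) (i j k : ℤ) (hij : i ≤ j) (hjk : j ≤ k) :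
    G s α i k = G s α i j * G s α j k
      - (Real.cos (α j))^2 * G s α i (j-1) * G s α (j+1) k := by
  obtain ⟨n, hn⟩ : ∃ n : ℕ, k = j + n := ⟨(k-j).toNat, by omega⟩
  subst hn
  clear hjk
  induction n using Nat.strong_induction_on with
  | _ n ih =>
    match n with
    | 0 =>
      simp only [Nat.cast_zero, add_zero]
      rw [G_self, G_pred s α (j+1) j (by ring), mul_one]
      ring
    | 1 =>
      simp only [Nat.cast_one]
      rw [G_rec s α i (j+1) (by omega), G_rec s α j (j+1) (by omega)]
      have e1 : j + (1:ℤ) - 1 = j := by ring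
      have e2 : j + (1:ℤ) - 2 = j - 1 := by ring
      rw [e1, e2, G_pred s α j (j-1) rfl, G_self s α j, G_self s α (j+1)]
      ring
    | (n+2) =>
      have hc : ((n:ℤ)+2) = ((n+2 : ℕ) : ℤ) := by push_cast; ring
      have hk : j + ((n+2:ℕ):ℤ) = j + (n:ℤ) + 2 := by push_cast; ring
      rw [hk, G_rec s α i (j + n + 2) (by omega), G_rec s α j (j + n + 2) (by omega),
        G_rec s α (j+1) (j + n + 2) (by omega)]
      have e1 : j + (n:ℤ) + 2 - 1 = j + ((n+1:ℕ):ℤ) := by push_cast; ring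
      have e2 : j + (n:ℤ) + 2 - 2 = j + ((n:ℕ):ℤ) := by ring
      rw [e1, e2, ih (n+1) (by omega), ih n (by omega)]
      ring
end

section
/- For all integers j < k, G(j,k) > Π(j,k), where Π(j,k) = ∏_{i=j}^{k-1} cos(α_i). -/
lemma Pprod_pos (α : ℤ → ℝ) (hα : ∀ i, 0 < Real.cos (α i)) (a b : ℤ) :
    0 < Pprod α a b :=
  Finset.prod_pos fun i _ => hα i

lemma Pprod_succ (α : ℤ → ℝ) (j : ℤ) (n : ℕ) :
    Pprod α j (j + (n + 1 : ℕ)) = Pprod α j (j + n) * Real.cos (α (j + n)) := by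
  unfold Pprod
  have h : j ≤ j + (n : ℤ) := by omega
  rw [show (j + ((n : ℕ) + 1 : ℕ) : ℤ) = (j + n) + 1 by push_cast; ring,
    show Finset.Ico j (j + (n:ℤ) + 1) = insert (j + (n:ℤ)) (Finset.Ico j (j + (n:ℤ))) by
      ext x; simp, Finset.prod_insert (by simp), mul_comm]

lemma key (s α : ℤ → ℝ) (hs : ∀ i, 0 < s i) (hα : ∀ i, 0 < Real.cos (α i))
    (j : ℤ) : ∀ n : ℕ,
    Gaux s α j (n + 1) ≥ Real.cos (α (j + n)) * Gaux s α j n + Pprod α j (j + n)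
      ∧ 0 < Gaux s α j (n + 1) ∧ 0 ≤ Gaux s α j n := by
  intro n
  induction n with
  | zero =>
    simp [Gaux, Pprod]
  | succ n ih =>
    obtain ⟨h1, h2, h3⟩ := ih
    have hc := hα (j + n)
    have hc' := hα (j + n + 1)
    have hsn := hs (j + n)
    have hP := Pprod_pos α hα j (j + n)
    have hPs : Pprod α j (j + (n + 1 : ℕ)) = Pprod α j (j + n) * Real.cos (α (j + n)) :=
      Pprod_succ α j n
    have hG : Gaux s α j (n + 2) =
        (2 * s (j + n) + Real.cos (α (j + n)) + Real.cos (α (j + n + 1))) * Gaux s α j (n+1)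
          - (Real.cos (α (j + n)))^2 * Gaux s α j n := rfl
    have hcast : (j + ((n : ℕ) + 1 : ℕ) : ℤ) = j + n + 1 := by push_cast; ring
    refine ⟨?_, ?_, le_of_lt h2⟩
    · rw [hG, hPs, hcast]
      nlinarith [mul_le_mul_of_nonneg_left h1 hc.le]
    · have : Gaux s α j (n + 2) ≥ Real.cos (α (j + n + 1)) * Gaux s α j (n+1)
          + Pprod α j (j + (n + 1 : ℕ)) := by
        rw [hG, hPs]
        nlinarith [mul_le_mul_of_nonneg_left h1 hc.le]
      nlinarith [Pprod_pos α hα j (j + (n + 1 : ℕ))]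

theorem stmt8 (s α : ℤ → ℝ) (hs : ∀ i, 0 < s i)
    (hα : ∀ i, 0 < Real.cos (α i)) (hα' : ∀ i, Real.cos (α i) ≤ 1)
    (j k : ℤ) (hjk : j < k) :
    G s α j k > Pprod α j k := by
  obtain ⟨m, hm⟩ : ∃ m : ℕ, (k - (j - 1)).toNat = m + 2 := by
    refine ⟨(k - j - 1).toNat, ?_⟩
    omega
  have hk : k = j + ((m + 1 : ℕ) : ℤ) := by omega
  obtain ⟨h1, h2, h3⟩ := key s α hs hα j (m + 1)
  obtain ⟨_, h2', _⟩ := key s α hs hα j m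
  have hc := hα (j + (m + 1 : ℕ))
  unfold G
  rw [hm, hk]
  calc Pprod α j (j + ((m+1:ℕ):ℤ)) < Real.cos (α (j + (m+1:ℕ))) * Gaux s α j (m+1)
        + Pprod α j (j + (m+1:ℕ)) := by nlinarith
    _ ≤ Gaux s α j (m + 2) := h1
end

section
/- Let N ≥ 1, write P := (−1)^{N+1} Π(0,N) and D := G(0,N) − cos²(α_0) G(1,N-1) + 2P. Then the determinant of the matrix [[G(0,N) + P, cos α_0 · G(1,N)], [−cos α_0 · G(0,N-1), −cos²(α_0) G(1,N-1) + P]] equals P · D. -/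
lemma wronsk (s α : ℤ → ℝ) : ∀ n : ℕ,
    Gaux s α 0 (n+1) * Gaux s α 1 (n+1) - Gaux s α 0 (n+2) * Gaux s α 1 n
      = (∏ i ∈ Finset.Ico (1:ℤ) ((n:ℤ)+1), Real.cos (α i))^2 := by
  intro n
  induction n with
  | zero => simp [Gaux]
  | succ n ih =>
    have h0 : Gaux s α 0 (n+3)
        = (2 * s ((n:ℤ)+1) + Real.cos (α ((n:ℤ)+1)) + Real.cos (α ((n:ℤ)+2)))
            * Gaux s α 0 (n+2) - (Real.cos (α ((n:ℤ)+1)))^2 * Gaux s α 0 (n+1) := by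
      show Gaux s α 0 ((n+1)+2) = _
      simp only [Gaux]
      push_cast
      try ring_nf
    have h1 : Gaux s α 1 (n+2)
        = (2 * s ((n:ℤ)+1) + Real.cos (α ((n:ℤ)+1)) + Real.cos (α ((n:ℤ)+2)))
            * Gaux s α 1 (n+1) - (Real.cos (α ((n:ℤ)+1)))^2 * Gaux s α 1 n := by
      simp only [Gaux]
      push_cast
      try ring_nf
    have hp : (∏ i ∈ Finset.Ico (1:ℤ) ((n:ℤ)+1+1), Real.cos (α i))
        = (∏ i ∈ Finset.Ico (1:ℤ) ((n:ℤ)+1), Real.cos (α i)) * Real.cos (α ((n:ℤ)+1)) := by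
      rw [show Finset.Ico (1:ℤ) ((n:ℤ)+1+1) = insert ((n:ℤ)+1) (Finset.Ico (1:ℤ) ((n:ℤ)+1)) from by
        ext x; simp, Finset.prod_insert (by simp)]
      ring
    push_cast
    rw [hp, h0, h1]
    linear_combination (Real.cos (α ((n:ℤ)+1)))^2 * ih

theorem stmt11 (s α : ℤ → ℝ) (N : ℤ) (hN : 1 ≤ N) :
    Matrix.det !![G s α 0 N + (-1 : ℝ)^(N+1).toNat * Pprod α 0 N,
        Real.cos (α 0) * G s α 1 N;
        -Real.cos (α 0) * G s α 0 (N-1),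
        -(Real.cos (α 0))^2 * G s α 1 (N-1) + (-1 : ℝ)^(N+1).toNat * Pprod α 0 N]
      = ((-1 : ℝ)^(N+1).toNat * Pprod α 0 N) *
        (G s α 0 N - (Real.cos (α 0))^2 * G s α 1 (N-1)
          + 2 * ((-1 : ℝ)^(N+1).toNat * Pprod α 0 N)) := by
  obtain ⟨n, rfl⟩ : ∃ n : ℕ, N = (n:ℤ)+1 := ⟨(N-1).toNat, by omega⟩
  have e1 : G s α 0 ((n:ℤ)+1) = Gaux s α 0 (n+2) := by
    unfold G; congr 1 <;> omega
  have e2 : G s α 1 ((n:ℤ)+1) = Gaux s α 1 (n+1) := by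
    unfold G; congr 1 <;> omega
  have e3 : G s α 0 ((n:ℤ)+1-1) = Gaux s α 0 (n+1) := by
    unfold G; congr 1 <;> omega
  have e4 : G s α 1 ((n:ℤ)+1-1) = Gaux s α 1 n := by
    unfold G; congr 1 <;> omega
  have ep : Pprod α 0 ((n:ℤ)+1)
      = Real.cos (α 0) * ∏ i ∈ Finset.Ico (1:ℤ) ((n:ℤ)+1), Real.cos (α i) := by
    unfold Pprod
    rw [show Finset.Ico (0:ℤ) ((n:ℤ)+1) = insert 0 (Finset.Ico (1:ℤ) ((n:ℤ)+1)) by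
      ext x; simp; omega]
    rw [Finset.prod_insert (by simp)]
  have key := wronsk s α n
  rw [Matrix.det_fin_two_of, e1, e2, e3, e4, ep]
  set Q := ∏ i ∈ Finset.Ico (1:ℤ) ((n:ℤ)+1), Real.cos (α i)
  set E := (-1 : ℝ)^(((n:ℤ)+1)+1).toNat
  have hE : E^2 = 1 := by
    simp only [E, ← pow_mul]
    rw [mul_comm, pow_mul]
    norm_num
  linear_combination (Real.cos (α 0))^2 * key - (Real.cos (α 0) * Q)^2 * hE
end

section
/- Let N ≥ 2 with α_N = α_0, all s_i > 0, all cos α_i ∈ (0,1]. Then D := G(0,N) − cos²(α_0) G(1,N-1) + 2(−1)^{N+1}Π(0,N) satisfies D > 2 s_{N-1} · G(0,N-1). In particular D > 0 and G(0,N-1)/D < 1/(2 s_{N-1}). -/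
lemma gaux_rec (s α : ℤ → ℝ) (j : ℤ) (n : ℕ) :
    Gaux s α j (n+2) = (2 * s (j + n) + Real.cos (α (j + n)) + Real.cos (α (j + n + 1))) * Gaux s α j (n+1)
      - (Real.cos (α (j + n)))^2 * Gaux s α j n := rfl

lemma prod_cos_pos (α : ℤ → ℝ) (hα : ∀ i, 0 < Real.cos (α i)) (j : ℤ) (n : ℕ) :
    0 < ∏ i ∈ Finset.range n, Real.cos (α (j + i)) :=
  Finset.prod_pos (fun i _ => hα _)

lemma F_bound (s α : ℤ → ℝ) (hs : ∀ i, 0 < s i) (hα : ∀ i, 0 < Real.cos (α i)) (j : ℤ) :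
    ∀ n : ℕ, 0 < Gaux s α j (n+1) ∧
      (∏ i ∈ Finset.range n, Real.cos (α (j + i)))
        ≤ Gaux s α j (n+1) - Real.cos (α (j + n)) * Gaux s α j n := by
  intro n
  induction n with
  | zero => simp [Gaux]
  | succ n ih =>
    obtain ⟨hpos, hF⟩ := ih
    have hrec := gaux_rec s α j n
    have key : Gaux s α j (n+2) - Real.cos (α (j + ((n+1:ℕ):ℤ))) * Gaux s α j (n+1)
        = 2 * s (j+(n:ℤ)) * Gaux s α j (n+1)
          + Real.cos (α (j+(n:ℤ))) * (Gaux s α j (n+1) - Real.cos (α (j+(n:ℤ))) * Gaux s α j n) := by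
      have hc : (j + (((n+1:ℕ)):ℤ)) = j + (n:ℤ) + 1 := by push_cast; ring
      rw [hc, hrec]; ring
    have hprod : (∏ i ∈ Finset.range (n+1), Real.cos (α (j + i)))
        = (∏ i ∈ Finset.range n, Real.cos (α (j + i))) * Real.cos (α (j + (n:ℤ))) :=
      Finset.prod_range_succ _ _
    have hcos := hα (j + (n:ℤ))
    have hmul : Real.cos (α (j+(n:ℤ))) * (∏ i ∈ Finset.range n, Real.cos (α (j + i)))
        ≤ Real.cos (α (j+(n:ℤ))) * (Gaux s α j (n+1) - Real.cos (α (j+(n:ℤ))) * Gaux s α j n) :=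
      mul_le_mul_of_nonneg_left hF hcos.le
    have hsg : 0 < 2 * s (j+(n:ℤ)) * Gaux s α j (n+1) := by
      have := hs (j+(n:ℤ)); nlinarith
    have hpp := prod_cos_pos α hα j n
    have hcg : 0 < Real.cos (α (j + ((n+1:ℕ):ℤ))) * Gaux s α j (n+1) :=
      mul_pos (hα _) hpos
    have hcp : 0 < Real.cos (α (j+(n:ℤ))) * (∏ i ∈ Finset.range n, Real.cos (α (j + i))) :=
      mul_pos hcos hpp
    constructor
    · linarith
    · rw [hprod]; linarith

lemma F_bound' (s α : ℤ → ℝ) (hs : ∀ i, 0 < s i) (hα : ∀ i, 0 < Real.cos (α i)) (j : ℤ) (n : ℕ) :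
    (∏ i ∈ Finset.range (n+1), Real.cos (α (j + i))) + 2 * s (j+(n:ℤ)) * Gaux s α j (n+1)
      ≤ Gaux s α j (n+2) - Real.cos (α (j + (n:ℤ) + 1)) * Gaux s α j (n+1) := by
  obtain ⟨hpos, hF⟩ := F_bound s α hs hα j n
  have hrec := gaux_rec s α j n
  have key : Gaux s α j (n+2) - Real.cos (α (j + (n:ℤ) + 1)) * Gaux s α j (n+1)
      = 2 * s (j+(n:ℤ)) * Gaux s α j (n+1)
        + Real.cos (α (j+(n:ℤ))) * (Gaux s α j (n+1) - Real.cos (α (j+(n:ℤ))) * Gaux s α j n) := by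
    rw [hrec]; ring
  have hprod : (∏ i ∈ Finset.range (n+1), Real.cos (α (j + i)))
      = (∏ i ∈ Finset.range n, Real.cos (α (j + i))) * Real.cos (α (j + (n:ℤ))) :=
    Finset.prod_range_succ _ _
  have hmul : Real.cos (α (j+(n:ℤ))) * (∏ i ∈ Finset.range n, Real.cos (α (j + i)))
      ≤ Real.cos (α (j+(n:ℤ))) * (Gaux s α j (n+1) - Real.cos (α (j+(n:ℤ))) * Gaux s α j n) :=
    mul_le_mul_of_nonneg_left hF (hα _).le
  rw [key, hprod]; linarith

lemma row1 (s α : ℤ → ℝ) (j : ℤ) : ∀ n : ℕ, Gaux s α j (n+2) =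
    (2 * s j + Real.cos (α j) + Real.cos (α (j+1))) * Gaux s α (j+1) (n+1)
      - (Real.cos (α (j+1)))^2 * Gaux s α (j+2) n := by
  intro n
  induction n using Nat.twoStepInduction with
  | zero => simp [Gaux, gaux_rec]
  | one =>
    have h0 := gaux_rec s α j 1
    have h1 := gaux_rec s α (j+1) 0
    simp only [Nat.cast_one, Nat.cast_zero, add_zero] at h0 h1
    rw [h0, h1]
    simp [Gaux]
    ring
  | more n ih1 ih2 =>
    have h0 := gaux_rec s α j (n+2)
    have h1 := gaux_rec s α (j+1) (n+1)
    have h2 := gaux_rec s α (j+2) n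
    have e1 : ((j+1) + ((n+1:ℕ):ℤ)) = j + ((n+2:ℕ):ℤ) := by push_cast; ring
    have e2 : ((j+2) + (n:ℤ)) = j + ((n+2:ℕ):ℤ) := by push_cast; ring
    rw [e1] at h1
    rw [e2] at h2
    rw [h0, h1, h2, ih1, ih2]
    ring

lemma E_bound (s α : ℤ → ℝ) (hs : ∀ i, 0 < s i) (hα : ∀ i, 0 < Real.cos (α i)) :
    ∀ n : ℕ, ∀ j : ℤ, (∏ i ∈ Finset.range n, Real.cos (α (j + 1 + i)))
      ≤ Gaux s α j (n+1) - Real.cos (α j) * Gaux s α (j+1) n := by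
  intro n
  induction n with
  | zero => intro j; simp [Gaux]
  | succ n ih =>
    intro j
    have hrow := row1 s α j n
    have key : Gaux s α j (n+2) - Real.cos (α j) * Gaux s α (j+1) (n+1)
        = 2 * s j * Gaux s α (j+1) (n+1)
          + Real.cos (α (j+1)) * (Gaux s α (j+1) (n+1) - Real.cos (α (j+1)) * Gaux s α (j+2) n) := by
      rw [hrow]; ring
    have hih := ih (j+1)
    have hmul : (∏ i ∈ Finset.range n, Real.cos (α (j + 2 + i))) * Real.cos (α (j+1))
        ≤ (Gaux s α (j+1) (n+1) - Real.cos (α (j+1)) * Gaux s α (j+2) n) * Real.cos (α (j+1)) := by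
      have : (j + 1 + 1) = j + 2 := by ring
      rw [this] at hih
      exact mul_le_mul_of_nonneg_right hih (hα _).le
    have hps : (∏ i ∈ Finset.range (n+1), Real.cos (α (j + 1 + i)))
        = (∏ i ∈ Finset.range n, Real.cos (α (j + 2 + i))) * Real.cos (α (j+1)) := by
      rw [Finset.prod_range_succ']
      congr 1
      · apply Finset.prod_congr rfl
        intro i _
        congr 2
        push_cast; ring
      · congr 2
        push_cast; ring
    have hpos := (F_bound s α hs hα (j+1) n).1
    have hsg : 0 < 2 * s j * Gaux s α (j+1) (n+1) := by
      have := hs j; nlinarith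
    rw [hps]
    nlinarith [hmul, key, hsg]

lemma E_bound' (s α : ℤ → ℝ) (hs : ∀ i, 0 < s i) (hα : ∀ i, 0 < Real.cos (α i)) (n : ℕ) (j : ℤ) :
    (∏ i ∈ Finset.range (n+1), Real.cos (α (j + 1 + i))) + 2 * s j * Gaux s α (j+1) (n+1)
      ≤ Gaux s α j (n+2) - Real.cos (α j) * Gaux s α (j+1) (n+1) := by
  have hrow := row1 s α j n
  have key : Gaux s α j (n+2) - Real.cos (α j) * Gaux s α (j+1) (n+1)
      = 2 * s j * Gaux s α (j+1) (n+1)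
        + Real.cos (α (j+1)) * (Gaux s α (j+1) (n+1) - Real.cos (α (j+1)) * Gaux s α (j+2) n) := by
    rw [hrow]; ring
  have hih := E_bound s α hs hα n (j+1)
  have hmul : (∏ i ∈ Finset.range n, Real.cos (α (j + 2 + i))) * Real.cos (α (j+1))
      ≤ (Gaux s α (j+1) (n+1) - Real.cos (α (j+1)) * Gaux s α (j+2) n) * Real.cos (α (j+1)) := by
    have h2 : (j + 1 + 1) = j + 2 := by ring
    rw [h2] at hih
    exact mul_le_mul_of_nonneg_right hih (hα _).le
  have hps : (∏ i ∈ Finset.range (n+1), Real.cos (α (j + 1 + i)))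
      = (∏ i ∈ Finset.range n, Real.cos (α (j + 2 + i))) * Real.cos (α (j+1)) := by
    rw [Finset.prod_range_succ']
    congr 1
    · apply Finset.prod_congr rfl
      intro i _
      congr 2
      push_cast; ring
    · congr 2
      push_cast; ring
  rw [hps]
  nlinarith [hmul, key]

lemma prod_Ico_nat (α : ℤ → ℝ) : ∀ k : ℕ,
    (∏ i ∈ Finset.Ico (0:ℤ) (k:ℤ), Real.cos (α i)) = ∏ i ∈ Finset.range k, Real.cos (α (i:ℤ)) := by
  intro k
  induction k with
  | zero => simp
  | succ k ih =>
    have hins : Finset.Ico (0:ℤ) ((k:ℤ)+1) = insert (k:ℤ) (Finset.Ico (0:ℤ) (k:ℤ)) := by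
      ext x; simp
    have hc : (((k+1:ℕ)):ℤ) = (k:ℤ)+1 := by push_cast; ring
    rw [hc, hins, Finset.prod_insert (by simp), ih, Finset.prod_range_succ, mul_comm]

theorem stmt14 (s α : ℤ → ℝ) (N : ℤ) (hN : 2 ≤ N) (hper : α N = α 0)
    (hs : ∀ i, 0 < s i)
    (hα : ∀ i, 0 < Real.cos (α i)) (hα' : ∀ i, Real.cos (α i) ≤ 1) :
    2 * s (N-1) * G s α 0 (N-1) <
        G s α 0 N - (Real.cos (α 0))^2 * G s α 1 (N-1)
          + 2 * ((-1 : ℝ)^(N+1).toNat * Pprod α 0 N) ∧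
    0 < G s α 0 N - (Real.cos (α 0))^2 * G s α 1 (N-1)
          + 2 * ((-1 : ℝ)^(N+1).toNat * Pprod α 0 N) ∧
    G s α 0 (N-1) /
        (G s α 0 N - (Real.cos (α 0))^2 * G s α 1 (N-1)
          + 2 * ((-1 : ℝ)^(N+1).toNat * Pprod α 0 N)) < 1 / (2 * s (N-1)) := by
  obtain ⟨m, rfl⟩ : ∃ m : ℕ, N = (m:ℤ) + 2 := ⟨(N-2).toNat, by omega⟩
  -- conversions of G, Pprod, pow
  have hG0N : G s α 0 ((m:ℤ)+2) = Gaux s α 0 (m+3) := by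
    unfold G; rw [show ((m:ℤ)+2 - (0-1)).toNat = m+3 by omega]
  have hG0N1 : G s α 0 ((m:ℤ)+2-1) = Gaux s α 0 (m+2) := by
    unfold G; rw [show ((m:ℤ)+2-1 - (0-1)).toNat = m+2 by omega]
  have hG1N1 : G s α 1 ((m:ℤ)+2-1) = Gaux s α 1 (m+1) := by
    unfold G; rw [show ((m:ℤ)+2-1 - (1-1)).toNat = m+1 by omega]
  have hpow : ((-1:ℝ))^(((m:ℤ)+2)+1).toNat = (-1:ℝ)^(m+3) := by
    rw [show (((m:ℤ)+2)+1).toNat = m+3 by omega]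
  have hP : Pprod α 0 ((m:ℤ)+2) = ∏ i ∈ Finset.range (m+2), Real.cos (α (i:ℤ)) := by
    unfold Pprod
    have h := prod_Ico_nat α (m+2)
    push_cast at h ⊢
    exact h
  -- key inequalities
  have hF := F_bound' s α hs hα 0 m
  simp only [zero_add] at hF
  have hE := E_bound' s α hs hα m 0
  simp only [zero_add] at hE
  -- recursion for Gaux 0 (m+3)
  have hGrec : Gaux s α 0 (m+3) = (2 * s ((m:ℤ)+1) + Real.cos (α ((m:ℤ)+1)) + Real.cos (α 0))
      * Gaux s α 0 (m+2) - (Real.cos (α ((m:ℤ)+1)))^2 * Gaux s α 0 (m+1) := by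
    have h := gaux_rec s α 0 (m+1)
    have e1 : ((0:ℤ) + ((m+1:ℕ):ℤ)) = (m:ℤ)+1 := by push_cast; ring
    have e2 : ((0:ℤ) + ((m+1:ℕ):ℤ) + 1) = (m:ℤ)+2 := by push_cast; ring
    rw [e2, e1, hper] at h
    exact h
  -- product identities
  have hP1 : (∏ i ∈ Finset.range (m+2), Real.cos (α (i:ℤ)))
      = (∏ i ∈ Finset.range (m+1), Real.cos (α (i:ℤ))) * Real.cos (α ((m:ℤ)+1)) := by
    have h := Finset.prod_range_succ (fun i : ℕ => Real.cos (α (i:ℤ))) (m+1)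
    push_cast at h
    exact h
  have hP2 : (∏ i ∈ Finset.range (m+2), Real.cos (α (i:ℤ)))
      = (∏ i ∈ Finset.range (m+1), Real.cos (α (1+(i:ℤ)))) * Real.cos (α 0) := by
    have h := Finset.prod_range_succ' (fun i : ℕ => Real.cos (α (i:ℤ))) (m+1)
    push_cast at h
    have hswap : ∀ i:ℕ, Real.cos (α ((i:ℤ)+1)) = Real.cos (α (1+(i:ℤ))) := fun i => by rw [add_comm]
    simp only [hswap] at h
    exact h
  have hPPos : 0 < ∏ i ∈ Finset.range (m+2), Real.cos (α (i:ℤ)) :=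
    Finset.prod_pos (fun i _ => hα _)
  have hneg : -(∏ i ∈ Finset.range (m+2), Real.cos (α (i:ℤ)))
      ≤ (-1:ℝ)^(m+3) * ∏ i ∈ Finset.range (m+2), Real.cos (α (i:ℤ)) := by
    rcases Nat.even_or_odd (m+3) with h | h
    · rw [h.neg_one_pow]; linarith
    · rw [h.neg_one_pow]; linarith
  have hG01 : 0 < Gaux s α 0 (m+1) := (F_bound s α hs hα 0 m).1
  have hG02 : 0 < Gaux s α 0 (m+2) := (F_bound s α hs hα 0 (m+1)).1
  have hG11 : 0 < Gaux s α 1 (m+1) := (F_bound s α hs hα 1 m).1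
  -- multiplied versions
  have X1 : ((∏ i ∈ Finset.range (m+1), Real.cos (α (i:ℤ))) + 2 * s (m:ℤ) * Gaux s α 0 (m+1))
        * Real.cos (α ((m:ℤ)+1))
      ≤ (Gaux s α 0 (m+2) - Real.cos (α ((m:ℤ)+1)) * Gaux s α 0 (m+1)) * Real.cos (α ((m:ℤ)+1)) :=
    mul_le_mul_of_nonneg_right hF (hα _).le
  have X2 : ((∏ i ∈ Finset.range (m+1), Real.cos (α (1+(i:ℤ)))) + 2 * s 0 * Gaux s α 1 (m+1))
        * Real.cos (α 0)
      ≤ (Gaux s α 0 (m+2) - Real.cos (α 0) * Gaux s α 1 (m+1)) * Real.cos (α 0) :=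
    mul_le_mul_of_nonneg_right hE (hα _).le
  have Y1 : 0 < Real.cos (α ((m:ℤ)+1)) * (s (m:ℤ) * Gaux s α 0 (m+1)) :=
    mul_pos (hα _) (mul_pos (hs _) hG01)
  have Y2 : 0 < Real.cos (α 0) * (s 0 * Gaux s α 1 (m+1)) :=
    mul_pos (hα _) (mul_pos (hs _) hG11)
  rw [hG0N, hG0N1, hG1N1, hpow, hP, hGrec,
    show ((m:ℤ)+2-1) = (m:ℤ)+1 by ring]
  have hmain : 2 * s ((m:ℤ)+1) * Gaux s α 0 (m+2) <
      (2 * s ((m:ℤ)+1) + Real.cos (α ((m:ℤ)+1)) + Real.cos (α 0)) * Gaux s α 0 (m+2)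
        - (Real.cos (α ((m:ℤ)+1)))^2 * Gaux s α 0 (m+1)
        - (Real.cos (α 0))^2 * Gaux s α 1 (m+1)
        + 2 * ((-1:ℝ)^(m+3) * ∏ i ∈ Finset.range (m+2), Real.cos (α (i:ℤ))) := by
    nlinarith [X1, X2, Y1, Y2, hneg, hP1, hP2]
  have hD : 0 < (2 * s ((m:ℤ)+1) + Real.cos (α ((m:ℤ)+1)) + Real.cos (α 0)) * Gaux s α 0 (m+2)
        - (Real.cos (α ((m:ℤ)+1)))^2 * Gaux s α 0 (m+1)
        - (Real.cos (α 0))^2 * Gaux s α 1 (m+1)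
        + 2 * ((-1:ℝ)^(m+3) * ∏ i ∈ Finset.range (m+2), Real.cos (α (i:ℤ))) := by
    have : 0 < 2 * s ((m:ℤ)+1) * Gaux s α 0 (m+2) :=
      mul_pos (mul_pos two_pos (hs _)) hG02
    linarith
  refine ⟨by linarith, by linarith, ?_⟩
  rw [div_lt_div_iff₀ (by linarith) (by have := hs ((m:ℤ)+1); linarith)]
  linarith
end
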